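/- arXiv:1505.00290 — 2 statements merged into one kernel-verified Lean document; each statement's English description precedes it below -/
import Mathlib

section
/- Let x ∈ V be a non-terminal of a finite connected weighted graph G with terminal set T and values v₀ : T → ℝ. Among terminal paths through x, the maximum gradient equals the maximum over pairs s, t ∈ T of (v₀(s) − v₀(t))/(dist(s,x) + dist(x,t)), where dist is the shortest-path metric; i.e., a steepest terminal path through x consists of shortest paths from x to its two endpoint terminals. -/
/-- Total length of a walk in a graph with edge lengths `ℓ`. -/
noncomputable def walkLen {V : Type*} (ℓ : Sym2 V → ℝ) {G : SimpleGraph V} {u v : V}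
    (p : G.Walk u v) : ℝ :=
  (p.darts.map fun d => ℓ d.edge).sum

/-- Shortest-path distance induced by edge lengths `ℓ`. -/
noncomputable def gdist {V : Type*} (G : SimpleGraph V) (ℓ : Sym2 V → ℝ) (u v : V) : ℝ :=
  sInf {x | ∃ p : G.Walk u v, walkLen ℓ p = x}

/-- Absolute gradient `|v x - v y| / ℓ(x,y)` of `v` on the unordered pair `e`. -/
noncomputable def absGrad {V : Type*} (ℓ : Sym2 V → ℝ) (v : V → ℝ) (e : Sym2 V) : ℝ :=
  Sym2.lift ⟨fun x y => |v x - v y|, fun x y => abs_sub_comm (v x) (v y)⟩ e / ℓ e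

/-- The absolute edge gradients of `v`, sorted in decreasing order. -/
noncomputable def gradList {V : Type*} [Fintype V] [DecidableEq V] (G : SimpleGraph V)
    [DecidableRel G.Adj] (ℓ : Sym2 V → ℝ) (v : V → ℝ) : List ℝ :=
  (G.edgeFinset.val.map (absGrad ℓ v)).sort (· ≥ ·)

section Aux

variable {V : Type*} {G : SimpleGraph V} {ℓ : Sym2 V → ℝ}

lemma walkLen_nonneg (hℓ : ∀ e ∈ G.edgeSet, 0 < ℓ e) {u v : V} (p : G.Walk u v) :
    0 ≤ walkLen ℓ p := by
  apply List.sum_nonneg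
  intro a ha
  simp only [List.mem_map] at ha
  obtain ⟨d, hd, rfl⟩ := ha
  exact (hℓ d.edge (p.edges_subset_edgeSet (List.mem_map_of_mem hd))).le

lemma walkLen_append {u v w : V} (p : G.Walk u v) (q : G.Walk v w) :
    walkLen ℓ (p.append q) = walkLen ℓ p + walkLen ℓ q := by
  simp [walkLen, SimpleGraph.Walk.darts_append]

lemma walkLen_bypass_le [DecidableEq V] (hℓ : ∀ e ∈ G.edgeSet, 0 < ℓ e) {u v : V} (p : G.Walk u v) :
    walkLen ℓ p.bypass ≤ walkLen ℓ p := by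
  have hnd : p.bypass.darts.Nodup := by
    have := p.bypass_isPath.isTrail.edges_nodup
    rw [SimpleGraph.Walk.edges] at this
    exact this.of_map _
  have hsub : List.Subperm p.bypass.darts p.darts := hnd.subperm p.darts_bypass_subset
  obtain ⟨l, hp, hs⟩ := hsub
  calc (p.bypass.darts.map fun d => ℓ d.edge).sum
      = (l.map fun d => ℓ d.edge).sum := ((hp.map _).sum_eq).symm
    _ ≤ (p.darts.map fun d => ℓ d.edge).sum := by
        refine (hs.map _).sum_le_sum ?_
        intro a ha
        simp only [List.mem_map] at ha
        obtain ⟨d, hd, rfl⟩ := ha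
        exact (hℓ d.edge (p.edges_subset_edgeSet (List.mem_map_of_mem hd))).le

lemma gdist_bddBelow (hℓ : ∀ e ∈ G.edgeSet, 0 < ℓ e) (u v : V) :
    BddBelow {x | ∃ p : G.Walk u v, walkLen ℓ p = x} := by
  refine ⟨0, ?_⟩
  rintro x ⟨p, rfl⟩
  exact walkLen_nonneg hℓ p

lemma gdist_le (hℓ : ∀ e ∈ G.edgeSet, 0 < ℓ e) {u v : V} (p : G.Walk u v) :
    gdist G ℓ u v ≤ walkLen ℓ p :=
  csInf_le (gdist_bddBelow hℓ u v) ⟨p, rfl⟩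

lemma exists_walk_gdist [Fintype V] (hG : G.Connected) (hℓ : ∀ e ∈ G.edgeSet, 0 < ℓ e)
    (u v : V) : ∃ p : G.Walk u v, p.IsPath ∧ walkLen ℓ p = gdist G ℓ u v := by
  classical
  haveI : DecidableRel G.Adj := Classical.decRel _
  -- the finite set of path lengths
  let S : Finset ℝ := Finset.univ.image
    (fun p : {p : G.Walk u v // p.IsPath ∧ p.length < Fintype.card V} => walkLen ℓ p.1)
  have hex : ∃ p : G.Walk u v, p.IsPath := by
    obtain ⟨w⟩ := hG.preconnected u v
    exact ⟨w.bypass, w.bypass_isPath⟩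
  obtain ⟨p₀, hp₀⟩ := hex
  have hSne : S.Nonempty := ⟨walkLen ℓ p₀,
    Finset.mem_image.2 ⟨⟨p₀, hp₀, hp₀.length_lt⟩, Finset.mem_univ _, rfl⟩⟩
  obtain ⟨q, hqmem, hqmin⟩ : ∃ a ∈ S, ∀ b ∈ S, a ≤ b := ⟨S.min' hSne, S.min'_mem hSne,
    fun b hb => S.min'_le b hb⟩
  obtain ⟨⟨q', hq', _⟩, _, rfl⟩ := Finset.mem_image.1 hqmem
  refine ⟨q', hq', le_antisymm (le_csInf ⟨walkLen ℓ q', q', rfl⟩ ?_) (gdist_le hℓ q')⟩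
  rintro x ⟨p, rfl⟩
  have h1 : walkLen ℓ q' ≤ walkLen ℓ p.bypass := by
    refine hqmin _ (Finset.mem_image.2 ⟨⟨p.bypass, p.bypass_isPath, p.bypass_isPath.length_lt⟩,
      Finset.mem_univ _, rfl⟩)
  exact h1.trans (walkLen_bypass_le hℓ p)

lemma gdist_pos [Fintype V] (hG : G.Connected) (hℓ : ∀ e ∈ G.edgeSet, 0 < ℓ e)
    {u v : V} (huv : u ≠ v) : 0 < gdist G ℓ u v := by
  obtain ⟨p, hp, hlen⟩ := exists_walk_gdist hG hℓ u v
  rw [← hlen]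
  cases p with
  | nil => exact absurd rfl huv
  | cons h q =>
    have h1 : 0 < ℓ (SimpleGraph.Dart.edge ⟨(_, _), h⟩) := hℓ _ h
    have h2 : 0 ≤ walkLen ℓ q := walkLen_nonneg hℓ q
    simp only [walkLen, SimpleGraph.Walk.darts_cons, List.map_cons, List.sum_cons]
    positivity

lemma gdist_nonneg (hℓ : ∀ e ∈ G.edgeSet, 0 < ℓ e) (hG : G.Connected) (u v : V) :
    0 ≤ gdist G ℓ u v := by
  refine le_csInf ?_ ?_
  · obtain ⟨w⟩ := hG.preconnected u v
    exact ⟨walkLen ℓ w, w, rfl⟩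
  · rintro x ⟨p, rfl⟩
    exact walkLen_nonneg hℓ p

end Aux

/-- The steepest gradient over terminal paths through a non-terminal `x` equals the
maximum over terminal pairs `(s, t)` of `(v₀ s − v₀ t)/(dist(s,x) + dist(x,t))`. -/
theorem vertex_steepest_path {V : Type*} [Fintype V] (G : SimpleGraph V) (hG : G.Connected)
    (ℓ : Sym2 V → ℝ) (hℓ : ∀ e ∈ G.edgeSet, 0 < ℓ e)
    (T : Set V) (hT : T.Nonempty) (v₀ : V → ℝ) (x : V) (hx : x ∉ T) :
    sSup {g : ℝ | ∃ s ∈ T, ∃ t ∈ T, ∃ p : G.Walk s t,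
        x ∈ p.support ∧ g = (v₀ s - v₀ t) / walkLen ℓ p} =
      sSup {g : ℝ | ∃ s ∈ T, ∃ t ∈ T,
        g = (v₀ s - v₀ t) / (gdist G ℓ s x + gdist G ℓ x t)} := by
  classical
  set A := {g : ℝ | ∃ s ∈ T, ∃ t ∈ T, ∃ p : G.Walk s t,
      x ∈ p.support ∧ g = (v₀ s - v₀ t) / walkLen ℓ p} with hA
  set B := {g : ℝ | ∃ s ∈ T, ∃ t ∈ T,
      g = (v₀ s - v₀ t) / (gdist G ℓ s x + gdist G ℓ x t)} with hB
  -- distances to/from x are positive on terminals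
  have hDpos : ∀ s ∈ T, ∀ t ∈ T, 0 < gdist G ℓ s x + gdist G ℓ x t := by
    intro s hs t ht
    have h1 : 0 < gdist G ℓ s x := gdist_pos hG hℓ (fun h => hx (h ▸ hs))
    have h2 : 0 < gdist G ℓ x t := gdist_pos hG hℓ (fun h => hx (h ▸ ht))
    linarith
  -- B is finite
  have hBfin : B.Finite := by
    have : B ⊆ (fun p : V × V => (v₀ p.1 - v₀ p.2) / (gdist G ℓ p.1 x + gdist G ℓ p.2 x)) ''
        Set.univ ∪ (fun p : V × V => (v₀ p.1 - v₀ p.2) / (gdist G ℓ p.1 x + gdist G ℓ x p.2)) ''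
        Set.univ := by
      rintro g ⟨s, hs, t, ht, rfl⟩
      exact Or.inr ⟨(s, t), Set.mem_univ _, rfl⟩
    exact Set.Finite.subset (Set.Finite.union (Set.finite_univ.image _) (Set.finite_univ.image _))
      this
  obtain ⟨t₀, ht₀⟩ := hT
  have h0B : (0 : ℝ) ∈ B := ⟨t₀, ht₀, t₀, ht₀, by simp⟩
  have hBne : B.Nonempty := ⟨0, h0B⟩
  -- sSup B is attained
  obtain ⟨gmax, hgmaxB, hgmax⟩ : ∃ g ∈ B, ∀ b ∈ B, b ≤ g := Set.exists_max_image B id hBfin hBne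
  have hsupB : sSup B = gmax := by
    apply le_antisymm (csSup_le hBne hgmax) (le_csSup hBfin.bddAbove hgmaxB)
  have hgmax0 : 0 ≤ gmax := hgmax 0 h0B
  -- every element of A is ≤ gmax
  have hAle : ∀ g ∈ A, g ≤ gmax := by
    rintro g ⟨s, hs, t, ht, p, hxp, rfl⟩
    have hD := hDpos s hs t ht
    have hlen : gdist G ℓ s x + gdist G ℓ x t ≤ walkLen ℓ p := by
      have hspec := (p.take_spec hxp).symm
      have : walkLen ℓ p = walkLen ℓ (p.takeUntil x hxp) + walkLen ℓ (p.dropUntil x hxp) := by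
        conv_lhs => rw [hspec]
        exact walkLen_append _ _
      rw [this]
      exact add_le_add (gdist_le hℓ _) (gdist_le hℓ _)
    have hlenpos : 0 < walkLen ℓ p := lt_of_lt_of_le hD hlen
    rcases le_or_gt (v₀ s - v₀ t) 0 with hneg | hpos
    · exact le_trans (div_nonpos_of_nonpos_of_nonneg hneg hlenpos.le) hgmax0
    · calc (v₀ s - v₀ t) / walkLen ℓ p ≤ (v₀ s - v₀ t) / (gdist G ℓ s x + gdist G ℓ x t) :=
          div_le_div_of_nonneg_left hpos.le hD hlen
        _ ≤ gmax := hgmax _ ⟨s, hs, t, ht, rfl⟩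
  -- A is nonempty: a walk from t₀ to t₀ through x
  obtain ⟨p₁, _, hp₁len⟩ := exists_walk_gdist hG hℓ t₀ x
  have hAne : A.Nonempty := by
    refine ⟨0, t₀, ht₀, t₀, ht₀, p₁.append p₁.reverse, ?_, by simp⟩
    simp [SimpleGraph.Walk.mem_support_append_iff]
  have hAbdd : BddAbove A := ⟨gmax, hAle⟩
  apply le_antisymm
  · rw [hsupB]
    exact csSup_le hAne hAle
  · rw [hsupB]
    -- construct a witness walk achieving gmax
    obtain ⟨s, hs, t, ht, rfl⟩ := hgmaxB
    obtain ⟨q₁, _, hq₁⟩ := exists_walk_gdist hG hℓ s x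
    obtain ⟨q₂, _, hq₂⟩ := exists_walk_gdist hG hℓ x t
    have hmem : (v₀ s - v₀ t) / (gdist G ℓ s x + gdist G ℓ x t) ∈ A := by
      refine ⟨s, hs, t, ht, q₁.append q₂, ?_, ?_⟩
      · simp [SimpleGraph.Walk.mem_support_append_iff]
      · rw [walkLen_append, hq₁, hq₂]
    exact le_csSup hAbdd hmem
end

section
/- Let V be finite, T ⊆ V nonempty, and consider the affine subspace A of ℝ^E consisting of gradient vectors of extensions of v₀ over edges of a finite connected weighted graph G. For p ∈ (1,∞), let v_p be the unique extension of v₀ minimizing the ℓ_p norm of its edge gradient vector. Then v_p converges pointwise, as p → ∞, to the lex-minimizer of (G, v₀). -/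
open Filter

/-- Asymmetry of lexicographic order on lists of reals. -/
theorem myLexAsymm : ∀ {l₁ l₂ : List ℝ}, List.Lex (· < ·) l₁ l₂ →
    List.Lex (· < ·) l₂ l₁ → False := by
  intro l₁ l₂ h
  induction h with
  | nil => intro h2; cases h2
  | @cons a l₁ l₂ h ih =>
      intro h2
      cases h2 with
      | cons h' => exact ih h'
      | rel hr => exact lt_irrefl _ hr
  | @rel a l₁ b l₂ hr =>
      intro h2
      cases h2 with
      | cons h' => exact lt_irrefl _ hr
      | rel hr' => exact lt_irrefl _ (hr.trans hr')

theorem myLexIrrefl {l : List ℝ} (h : List.Lex (· < ·) l l) : False :=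
  myLexAsymm h h

/-- Key combinatorial lemma: if two decreasing sorted lists correspond to
multisets `C + R₁` and `C + R₂` where everything in `R₁` is `< τ` and `τ ∈ R₂`,
then the first list is lexicographically smaller. -/
theorem myLL (τ : ℝ) : ∀ (l₁ : List ℝ) (l₂ : List ℝ) (C R₁ R₂ : Multiset ℝ),
    l₁.Pairwise (· ≥ ·) → l₂.Pairwise (· ≥ ·) →
    (l₁ : Multiset ℝ) = C + R₁ → (l₂ : Multiset ℝ) = C + R₂ →
    Multiset.card R₁ = Multiset.card R₂ →
    (∀ x ∈ R₁, x < τ) → τ ∈ R₂ →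
    List.Lex (· < ·) l₁ l₂ := by
  intro l₁
  induction l₁ with
  | nil =>
      intro l₂ C R₁ R₂ _ _ h1 h2 hcard hR1 hR2
      -- C + R₁ = 0, so R₁ = 0, so R₂ = 0, contradicting τ ∈ R₂
      have h0 : Multiset.card (C + R₁) = 0 := by
        rw [← h1]; simp
      rw [Multiset.card_add] at h0
      have hR1' : Multiset.card R₁ = 0 := by omega
      have : Multiset.card R₂ = 0 := by omega
      have : R₂ = 0 := Multiset.card_eq_zero.mp this
      rw [this] at hR2; simp at hR2
  | cons a l₁' ih =>
      intro l₂ C R₁ R₂ hs1 hs2 h1 h2 hcard hR1 hR2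
      cases l₂ with
      | nil =>
          exfalso
          have h0 : Multiset.card (C + R₂) = 0 := by rw [← h2]; simp
          rw [Multiset.card_add] at h0
          have : R₂ = 0 := Multiset.card_eq_zero.mp (by omega)
          rw [this] at hR2; simp at hR2
      | cons b l₂' =>
          have hbτ : τ ≤ b := by
            have hmem : τ ∈ (↑(b :: l₂') : Multiset ℝ) := by
              rw [h2]; exact Multiset.mem_add.mpr (Or.inr hR2)
            have : τ = b ∨ τ ∈ l₂' := by simpa using hmem
            rcases this with h | h
            · exact le_of_eq h
            · exact List.rel_of_pairwise_cons hs2 h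
          have hab : a ≤ b := by
            have hmem : a ∈ C + R₁ := by
              rw [← h1]; simp
            rcases Multiset.mem_add.mp hmem with hC | hR
            · have : a ∈ (↑(b :: l₂') : Multiset ℝ) := by
                rw [h2]; exact Multiset.mem_add.mpr (Or.inl hC)
              have : a = b ∨ a ∈ l₂' := by simpa using this
              rcases this with h | h
              · exact le_of_eq h
              · exact List.rel_of_pairwise_cons hs2 h
            · exact le_of_lt (lt_of_lt_of_le (hR1 a hR) hbτ)
          rcases lt_or_eq_of_le hab with hlt | heq
          · exact List.Lex.rel hlt
          · -- a = b; a must be in C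
            subst heq
            by_cases hC : a ∈ C
            · have hC' : C = a ::ₘ C.erase a := (Multiset.cons_erase hC).symm
              have h1' : (↑l₁' : Multiset ℝ) = C.erase a + R₁ := by
                have : a ::ₘ (↑l₁' : Multiset ℝ) = a ::ₘ (C.erase a + R₁) := by
                  have := h1
                  rw [hC'] at this
                  simpa [Multiset.cons_add] using this
                exact (Multiset.cons_inj_right a).mp this
              have h2' : (↑l₂' : Multiset ℝ) = C.erase a + R₂ := by
                have : a ::ₘ (↑l₂' : Multiset ℝ) = a ::ₘ (C.erase a + R₂) := by
                  have := h2
                  rw [hC'] at this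
                  simpa [Multiset.cons_add] using this
                exact (Multiset.cons_inj_right a).mp this
              exact List.Lex.cons (ih l₂' (C.erase a) R₁ R₂ hs1.of_cons hs2.of_cons
                h1' h2' hcard hR1 hR2)
            · exfalso
              have hmem : a ∈ C + R₁ := by rw [← h1]; simp
              rcases Multiset.mem_add.mp hmem with h | h
              · exact hC h
              · exact absurd hbτ (not_le.mpr (hR1 a h))


set_option linter.unusedSectionVars false

section GraphAux

variable {V : Type*} [Fintype V] [DecidableEq V]

/-- `w` has the same (signed) difference as `z` across the edge `e`. -/
def MatchE (z w : V → ℝ) (e : Sym2 V) : Prop :=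
  ∀ x y : V, e = s(x, y) → w x - w y = z x - z y

theorem absGrad_mk (ℓ : Sym2 V → ℝ) (v : V → ℝ) (x y : V) :
    absGrad ℓ v s(x, y) = |v x - v y| / ℓ s(x, y) := by
  simp [absGrad]

theorem absGrad_nonneg {G : SimpleGraph V} [DecidableRel G.Adj]
    {ℓ : Sym2 V → ℝ} (hℓ : ∀ e ∈ G.edgeSet, 0 < ℓ e) (v : V → ℝ)
    {e : Sym2 V} (he : e ∈ G.edgeFinset) : 0 ≤ absGrad ℓ v e := by
  have hle : 0 < ℓ e := hℓ e (SimpleGraph.mem_edgeFinset.mp he)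
  induction e with
  | _ x y =>
    rw [absGrad_mk]
    exact div_nonneg (abs_nonneg _) hle.le

theorem matchE_of_rep {z w : V → ℝ} {e : Sym2 V} {x₀ y₀ : V}
    (he : e = s(x₀, y₀)) (h : w x₀ - w y₀ = z x₀ - z y₀) : MatchE z w e := by
  intro x y hxy
  rw [he] at hxy
  rcases Sym2.eq_iff.mp hxy.symm with ⟨hx, hy⟩ | ⟨hx, hy⟩
  · subst hx; subst hy; exact h
  · subst hx; subst hy; linarith

theorem absGrad_eq_of_diff_eq {ℓ : Sym2 V → ℝ} {f g : V → ℝ} {e : Sym2 V}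
    (h : ∀ x y : V, e = s(x, y) → f x - f y = g x - g y) :
    absGrad ℓ f e = absGrad ℓ g e := by
  induction e with
  | _ x y =>
    rw [absGrad_mk, absGrad_mk, h x y rfl]

theorem matchE_absGrad_eq {ℓ : Sym2 V → ℝ} {z w : V → ℝ} {e : Sym2 V}
    (h : MatchE z w e) : absGrad ℓ w e = absGrad ℓ z e :=
  absGrad_eq_of_diff_eq h

theorem absGrad_tendsto {ℓ : Sym2 V → ℝ} {f : ℕ → V → ℝ} {w : V → ℝ}
    (h : ∀ x, Tendsto (fun n => f n x) atTop (nhds (w x))) (e : Sym2 V) :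
    Tendsto (fun n => absGrad ℓ (f n) e) atTop (nhds (absGrad ℓ w e)) := by
  induction e with
  | _ x y =>
    simp only [absGrad_mk]
    exact (((h x).sub (h y)).abs).div_const _

/-- Telescoping a difference bound along a walk. -/
theorem walk_diff_bound {G : SimpleGraph V} {ℓ : Sym2 V → ℝ} {v : V → ℝ} {C : ℝ}
    (h : ∀ x y : V, G.Adj x y → |v x - v y| ≤ C * ℓ s(x, y)) :
    ∀ {a b : V} (q : G.Walk a b), |v a - v b| ≤ C * walkLen ℓ q := by
  intro a b q
  induction q with
  | nil => simp [walkLen]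
  | @cons a b c hadj q ih =>
    have hstep : |v a - v b| ≤ C * ℓ s(a, b) := h a b hadj
    have hlen : walkLen ℓ (SimpleGraph.Walk.cons hadj q) = ℓ s(a, b) + walkLen ℓ q := by
      simp [walkLen, SimpleGraph.Walk.darts, SimpleGraph.Dart.edge]
    calc |v a - v c| = |(v a - v b) + (v b - v c)| := by ring_nf
      _ ≤ |v a - v b| + |v b - v c| := abs_add_le _ _
      _ ≤ C * ℓ s(a, b) + C * walkLen ℓ q := add_le_add hstep ih
      _ = C * walkLen ℓ (SimpleGraph.Walk.cons hadj q) := by rw [hlen]; ring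

theorem walk_const {G : SimpleGraph V} {f : V → ℝ}
    (h : ∀ x y : V, G.Adj x y → f x = f y) :
    ∀ {a b : V} (_ : G.Walk a b), f a = f b := by
  intro a b q
  induction q with
  | nil => rfl
  | @cons a b c hadj q ih => exact (h a b hadj).trans ih

end GraphAux

theorem rpow_contra {θ θ' M : ℝ} (h0 : 0 < θ) (h1 : θ < θ') {u : ℕ → ℝ}
    (hu : Tendsto u atTop atTop)
    (h : ∀ᶠ n in atTop, θ' ^ u n ≤ M * θ ^ u n) : False := by
  have hr : 1 < θ' / θ := (one_lt_div h0).mpr h1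
  have hlog : 0 < Real.log (θ' / θ) := Real.log_pos hr
  have htend : Tendsto (fun n => (θ' / θ) ^ u n) atTop atTop := by
    have h2 : Tendsto (fun n => Real.log (θ' / θ) * u n) atTop atTop :=
      (tendsto_const_mul_atTop_of_pos hlog).mpr hu
    have h3 : Tendsto (fun n => Real.exp (Real.log (θ' / θ) * u n)) atTop atTop :=
      Real.tendsto_exp_atTop.comp h2
    refine h3.congr fun n => ?_
    rw [Real.rpow_def_of_pos (by positivity)]
  have hev : ∀ᶠ n in atTop, M < (θ' / θ) ^ u n := htend.eventually_gt_atTop M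
  rcases (h.and hev).exists with ⟨n, hle, hgt⟩
  have hθp : (0:ℝ) < θ ^ u n := Real.rpow_pos_of_pos h0 _
  have : θ' ^ u n = (θ' / θ) ^ u n * θ ^ u n := by
    rw [Real.div_rpow (le_of_lt (h0.trans h1)) h0.le]
    field_simp
  nlinarith

section Main

variable {V : Type*} [Fintype V] [DecidableEq V]
variable {G : SimpleGraph V} [DecidableRel G.Adj]
variable {ℓ : Sym2 V → ℝ} {T : Set V} {v₀ : V → ℝ} {vp : ℝ → V → ℝ} {vlex : V → ℝ}

/-- `w` is a pointwise cluster value of the family `vp` along some sequence of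
exponents tending to infinity. -/
def Cluster (vp : ℝ → V → ℝ) (w : V → ℝ) : Prop :=
  ∃ u : ℕ → ℝ, (∀ n, 1 < u n) ∧ Filter.Tendsto u atTop atTop ∧
    ∀ x, Filter.Tendsto (fun n => vp (u n) x) atTop (nhds (w x))

theorem cluster_ext (hpext : ∀ p : ℝ, 1 < p → ∀ t ∈ T, vp p t = v₀ t)
    {w : V → ℝ} (hw : Cluster vp w) : ∀ t ∈ T, w t = v₀ t := by
  rcases hw with ⟨u, hu1, _, hconv⟩
  intro t ht
  have h1 : Filter.Tendsto (fun n => vp (u n) t) atTop (nhds (v₀ t)) :=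
    tendsto_const_nhds.congr fun n => (hpext (u n) (hu1 n) t ht).symm
  exact tendsto_nhds_unique (hconv t) h1

theorem grad_bound (hℓ : ∀ e ∈ G.edgeSet, 0 < ℓ e)
    (hpmin : ∀ p : ℝ, 1 < p → ∀ w : V → ℝ, (∀ t ∈ T, w t = v₀ t) →
      ∑ e ∈ G.edgeFinset, absGrad ℓ (vp p) e ^ p ≤
        ∑ e ∈ G.edgeFinset, absGrad ℓ w e ^ p)
    (hlexext : ∀ t ∈ T, vlex t = v₀ t)
    {p : ℝ} (hp : 1 < p) {e : Sym2 V} (he : e ∈ G.edgeFinset) :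
    absGrad ℓ (vp p) e ≤
      (G.edgeFinset.card : ℝ) * (1 + ∑ f ∈ G.edgeFinset, absGrad ℓ vlex f) := by
  set m := (G.edgeFinset.card : ℝ) with hm
  set A := 1 + ∑ f ∈ G.edgeFinset, absGrad ℓ vlex f with hA
  have hsum0 : 0 ≤ ∑ f ∈ G.edgeFinset, absGrad ℓ vlex f :=
    Finset.sum_nonneg fun f hf => absGrad_nonneg hℓ _ hf
  have hA1 : 1 ≤ A := by rw [hA]; linarith
  have hm1 : (1:ℝ) ≤ m := by
    rw [hm]
    exact_mod_cast Nat.one_le_iff_ne_zero.mpr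
      (Finset.card_ne_zero_of_mem he)
  have hAe : ∀ f ∈ G.edgeFinset, absGrad ℓ vlex f ≤ A := by
    intro f hf
    have := Finset.single_le_sum (f := fun f => absGrad ℓ vlex f)
      (fun g hg => absGrad_nonneg hℓ _ hg) hf
    rw [hA]; linarith
  have hx0 : 0 ≤ absGrad ℓ (vp p) e := absGrad_nonneg hℓ _ he
  have hp0 : (0:ℝ) < p := by linarith
  by_contra hcon
  push_neg at hcon
  have hmA0 : (0:ℝ) ≤ m * A := by nlinarith
  have key : (m * A) ^ p < absGrad ℓ (vp p) e ^ p :=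
    Real.rpow_lt_rpow hmA0 hcon hp0
  have h1 : absGrad ℓ (vp p) e ^ p ≤ ∑ f ∈ G.edgeFinset, absGrad ℓ (vp p) f ^ p :=
    Finset.single_le_sum (fun f hf => Real.rpow_nonneg (absGrad_nonneg hℓ _ hf) p) he
  have h2 := hpmin p hp vlex hlexext
  have h3 : ∑ f ∈ G.edgeFinset, absGrad ℓ vlex f ^ p ≤
      ∑ _f ∈ G.edgeFinset, A ^ p :=
    Finset.sum_le_sum fun f hf =>
      Real.rpow_le_rpow (absGrad_nonneg hℓ _ hf) (hAe f hf) hp0.le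
  have h4 : ∑ _f ∈ G.edgeFinset, A ^ p = m * A ^ p := by
    rw [Finset.sum_const, nsmul_eq_mul, hm]
  have h5 : m * A ^ p ≤ (m * A) ^ p := by
    rw [Real.mul_rpow (by linarith) (by linarith)]
    have hmp : m ≤ m ^ p := by
      calc m = m ^ (1:ℝ) := (Real.rpow_one m).symm
        _ ≤ m ^ p := Real.rpow_le_rpow_of_exponent_le hm1 hp.le
    have hAp : (0:ℝ) ≤ A ^ p := Real.rpow_nonneg (by linarith) p
    exact mul_le_mul_of_nonneg_right hmp hAp
  linarith

theorem stepA (hℓ : ∀ e ∈ G.edgeSet, 0 < ℓ e)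
    (hpext : ∀ p : ℝ, 1 < p → ∀ t ∈ T, vp p t = v₀ t)
    (hpmin : ∀ p : ℝ, 1 < p → ∀ w : V → ℝ, (∀ t ∈ T, w t = v₀ t) →
      ∑ e ∈ G.edgeFinset, absGrad ℓ (vp p) e ^ p ≤
        ∑ e ∈ G.edgeFinset, absGrad ℓ w e ^ p)
    (hlexext : ∀ t ∈ T, vlex t = v₀ t)
    (S : Finset (Sym2 V)) (hS : S ⊆ G.edgeFinset)
    (hne : (G.edgeFinset \ S).Nonempty)
    {w : V → ℝ} (hw : Cluster vp w)
    (hmatch : ∀ e ∈ S, MatchE vlex w e)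
    {τ : ℝ} (hτ0 : 0 ≤ τ)
    (hτub : ∀ e ∈ G.edgeFinset \ S, absGrad ℓ vlex e ≤ τ)
    {e₁ : Sym2 V} (he₁ : e₁ ∈ G.edgeFinset \ S) :
    absGrad ℓ w e₁ ≤ τ := by
  obtain ⟨estar, hestar, hβmax⟩ :=
    Finset.exists_max_image (G.edgeFinset \ S) (absGrad ℓ w) hne
  set β := absGrad ℓ w estar with hβ
  suffices hβτ : β ≤ τ by exact le_trans (hβmax e₁ he₁) hβτ
  by_contra hcon
  push_neg at hcon
  set c := β - τ with hc
  have hc0 : 0 < c := by rw [hc]; linarith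
  have hwext : ∀ t ∈ T, w t = v₀ t := cluster_ext hpext hw
  rcases hw with ⟨u, hu1, huT, hconv⟩
  set y : ℕ → V → ℝ := fun n v => vp (u n) v + (vlex v - w v) / 2 with hy
  have hyext : ∀ n, ∀ t ∈ T, y n t = v₀ t := by
    intro n t ht
    simp only [hy, hpext (u n) (hu1 n) t ht, hlexext t ht, hwext t ht]
    ring
  have hySeq : ∀ n, ∀ e ∈ S, absGrad ℓ (y n) e = absGrad ℓ (vp (u n)) e := by
    intro n e heS
    apply absGrad_eq_of_diff_eq
    intro a b hab
    have hm := hmatch e heS a b hab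
    simp only [hy]
    linarith
  have hmaster : ∀ n, ∑ e ∈ G.edgeFinset \ S, absGrad ℓ (vp (u n)) e ^ (u n) ≤
      ∑ e ∈ G.edgeFinset \ S, absGrad ℓ (y n) e ^ (u n) := by
    intro n
    have h0 := hpmin (u n) (hu1 n) (y n) (hyext n)
    have hsplit1 := Finset.sum_sdiff (f := fun e => absGrad ℓ (vp (u n)) e ^ (u n)) hS
    have hsplit2 := Finset.sum_sdiff (f := fun e => absGrad ℓ (y n) e ^ (u n)) hS
    have hSeq : ∑ e ∈ S, absGrad ℓ (y n) e ^ u n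
        = ∑ e ∈ S, absGrad ℓ (vp (u n)) e ^ u n :=
      Finset.sum_congr rfl fun e heS => by rw [hySeq n e heS]
    linarith
  have hevE : ∀ e ∈ G.edgeFinset \ S, ∀ᶠ n in atTop,
      absGrad ℓ (y n) e ≤ β - c / 4 := by
    intro e heE
    have heE' : e ∈ G.edgeFinset := (Finset.mem_sdiff.mp heE).1
    have hℓe : 0 < ℓ e := hℓ e (SimpleGraph.mem_edgeFinset.mp heE')
    obtain ⟨a, b, rfl⟩ : ∃ a b, e = s(a, b) := by
      induction e with
      | _ a b => exact ⟨a, b, rfl⟩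
    have t1 : Filter.Tendsto (fun n => absGrad ℓ (vp (u n)) s(a, b)) atTop
        (nhds (absGrad ℓ w s(a, b))) := absGrad_tendsto hconv _
    have t2 : Filter.Tendsto
        (fun n => absGrad ℓ (fun v => vp (u n) v - w v) s(a, b)) atTop
        (nhds 0) := by
      have h0 : absGrad ℓ (fun _ : V => (0:ℝ)) s(a,b) = 0 := by
        rw [absGrad_mk]; simp
      have := absGrad_tendsto (ℓ := ℓ) (f := fun n v => vp (u n) v - w v)
        (w := fun _ => (0:ℝ)) (fun x => by simpa using (hconv x).sub_const (w x)) s(a, b)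
      rwa [h0] at this
    have hb : absGrad ℓ w s(a, b) ≤ β := hβmax _ heE
    have ev1 : ∀ᶠ n in atTop, absGrad ℓ (vp (u n)) s(a, b) < β + c/4 :=
      t1.eventually_lt_const (by linarith)
    have ev2 : ∀ᶠ n in atTop,
        absGrad ℓ (fun v => vp (u n) v - w v) s(a, b) < c/4 :=
      t2.eventually_lt_const (by linarith)
    filter_upwards [ev1, ev2] with n h1 h2
    rw [absGrad_mk] at h1 h2 ⊢
    have hτe : |vlex a - vlex b| / ℓ s(a,b) ≤ τ := by
      have := hτub _ heE
      rwa [absGrad_mk] at this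
    set A' := vp (u n) a - vp (u n) b with hA'
    set B' := vlex a - vlex b with hB'
    set C' := w a - w b with hC'
    have hdiff : y n a - y n b = (A' + B' + (A' - C')) / 2 := by
      simp only [hy, hA', hB', hC']; ring
    have h2' : |A' - C'| / ℓ s(a,b) < c / 4 := by
      have : (fun v => vp (u n) v - w v) a - (fun v => vp (u n) v - w v) b
          = A' - C' := by simp only [hA', hC']; ring
      rwa [this] at h2
    have habs : |y n a - y n b| ≤ (|A'| + |B'| + |A' - C'|) / 2 := by
      rw [hdiff]
      calc |(A' + B' + (A' - C')) / 2| = |A' + B' + (A' - C')| / 2 := by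
            rw [abs_div]; norm_num
        _ ≤ (|A'| + |B'| + |A' - C'|) / 2 := by
            have := abs_add_three A' B' (A' - C')
            linarith
    have hdivs : |y n a - y n b| / ℓ s(a,b) ≤
        (|A'| / ℓ s(a,b) + |B'| / ℓ s(a,b) + |A' - C'| / ℓ s(a,b)) / 2 := by
      rw [div_le_iff₀ hℓe] at *
      calc |y n a - y n b| ≤ (|A'| + |B'| + |A' - C'|) / 2 := habs
        _ = (|A'| / ℓ s(a,b) + |B'| / ℓ s(a,b) + |A' - C'| / ℓ s(a,b)) / 2
            * ℓ s(a,b) := by field_simp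
    have h1' : |A'| / ℓ s(a,b) < β + c/4 := h1
    linarith
  have hevAll : ∀ᶠ n in atTop, ∀ e ∈ G.edgeFinset \ S,
      absGrad ℓ (y n) e ≤ β - c/4 := (Finset.eventually_all _).mpr hevE
  have hevStar : ∀ᶠ n in atTop, β - c/8 < absGrad ℓ (vp (u n)) estar :=
    (absGrad_tendsto hconv estar).eventually_const_lt (by rw [← hβ]; linarith)
  have hθ0 : 0 < β - c/4 := by rw [hc]; linarith
  have hθθ' : β - c/4 < β - c/8 := by linarith
  refine rpow_contra hθ0 hθθ' (M := ((G.edgeFinset \ S).card : ℝ)) huT ?_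
  filter_upwards [hevAll, hevStar] with n hAll hStar
  have hun0 : (0:ℝ) ≤ u n := by have := hu1 n; linarith
  calc (β - c/8) ^ u n ≤ absGrad ℓ (vp (u n)) estar ^ u n :=
        Real.rpow_le_rpow (by linarith) hStar.le hun0
    _ ≤ ∑ e ∈ G.edgeFinset \ S, absGrad ℓ (vp (u n)) e ^ u n :=
        Finset.single_le_sum
          (fun e he => Real.rpow_nonneg
            (absGrad_nonneg hℓ _ (Finset.mem_sdiff.mp he).1) _) hestar
    _ ≤ ∑ e ∈ G.edgeFinset \ S, absGrad ℓ (y n) e ^ u n := hmaster n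
    _ ≤ ∑ _e ∈ G.edgeFinset \ S, (β - c/4) ^ u n :=
        Finset.sum_le_sum fun e he =>
          Real.rpow_le_rpow
            (absGrad_nonneg hℓ _ (Finset.mem_sdiff.mp he).1) (hAll e he) hun0
    _ = ((G.edgeFinset \ S).card : ℝ) * (β - c/4) ^ u n := by
        rw [Finset.sum_const, nsmul_eq_mul]

end Main

section Main2

variable {V : Type*} [Fintype V] [DecidableEq V]
variable {G : SimpleGraph V} [DecidableRel G.Adj]
variable {ℓ : Sym2 V → ℝ} {T : Set V} {v₀ : V → ℝ} {vp : ℝ → V → ℝ} {vlex : V → ℝ}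

theorem critical (hℓ : ∀ e ∈ G.edgeSet, 0 < ℓ e)
    (hlexext : ∀ t ∈ T, vlex t = v₀ t)
    (hlex : ∀ w : V → ℝ, (∀ t ∈ T, w t = v₀ t) → w ≠ vlex →
      List.Lex (· < ·) (gradList G ℓ vlex) (gradList G ℓ w))
    (S : Finset (Sym2 V)) (hS : S ⊆ G.edgeFinset)
    (hne : (G.edgeFinset \ S).Nonempty)
    {τ : ℝ}
    (hτub : ∀ e ∈ G.edgeFinset \ S, absGrad ℓ vlex e ≤ τ)
    (hτmem : ∃ e₀ ∈ G.edgeFinset \ S, absGrad ℓ vlex e₀ = τ) :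
    ∃ e ∈ G.edgeFinset \ S, ∀ y : V → ℝ, (∀ t ∈ T, y t = v₀ t) →
      (∀ e' ∈ S, MatchE vlex y e') →
      (∀ e' ∈ G.edgeFinset \ S, absGrad ℓ y e' ≤ τ) →
      MatchE vlex y e := by
  by_contra hcon
  push_neg at hcon
  choose Y hY1 hY2 hY3 hY4 using hcon
  -- midpoints
  set z : ∀ e, e ∈ G.edgeFinset \ S → (V → ℝ) :=
    fun e he v => (Y e he v + vlex v) / 2 with hzdef
  have hz1 : ∀ e he, ∀ t ∈ T, z e he t = v₀ t := by
    intro e he t ht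
    simp only [hzdef, hY1 e he t ht, hlexext t ht]
    ring
  have hz2 : ∀ e he, ∀ e' ∈ S, MatchE vlex (z e he) e' := by
    intro e he e' he' a b hab
    have h1 := hY2 e he e' he' a b hab
    simp only [hzdef]
    linarith
  have hz3 : ∀ e he, ∀ e' ∈ G.edgeFinset \ S, absGrad ℓ (z e he) e' ≤ τ := by
    intro e he e' he'
    have he'E : e' ∈ G.edgeFinset := (Finset.mem_sdiff.mp he').1
    have hle : 0 < ℓ e' := hℓ e' (SimpleGraph.mem_edgeFinset.mp he'E)
    obtain ⟨a, b, rfl⟩ : ∃ a b, e' = s(a, b) := by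
      induction e' with
      | _ a b => exact ⟨a, b, rfl⟩
    have h1 : |Y e he a - Y e he b| / ℓ s(a,b) ≤ τ := by
      have := hY3 e he _ he'; rwa [absGrad_mk] at this
    have h2 : |vlex a - vlex b| / ℓ s(a,b) ≤ τ := by
      have := hτub _ he'; rwa [absGrad_mk] at this
    rw [absGrad_mk]
    rw [div_le_iff₀ hle] at h1 h2 ⊢
    have hd : z e he a - z e he b = ((Y e he a - Y e he b) + (vlex a - vlex b)) / 2 := by
      simp only [hzdef]; ring
    rw [hd]
    have := abs_add_le (Y e he a - Y e he b) (vlex a - vlex b)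
    rw [abs_div]
    have h2' : |(2:ℝ)| = 2 := by norm_num
    rw [h2']
    linarith
  have hz4 : ∀ e he, absGrad ℓ (z e he) e < τ := by
    intro e he
    have heE : e ∈ G.edgeFinset := (Finset.mem_sdiff.mp he).1
    have hle : 0 < ℓ e := hℓ e (SimpleGraph.mem_edgeFinset.mp heE)
    have hnm := hY4 e he
    rw [MatchE] at hnm
    push_neg at hnm
    obtain ⟨a, b, hab, hne'⟩ := hnm
    subst hab
    have h1 : |Y s(a,b) he a - Y s(a,b) he b| ≤ τ * ℓ s(a,b) := by
      have := hY3 s(a,b) he _ he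
      rwa [absGrad_mk, div_le_iff₀ hle] at this
    have h2 : |vlex a - vlex b| ≤ τ * ℓ s(a,b) := by
      have := hτub _ he
      rwa [absGrad_mk, div_le_iff₀ hle] at this
    rw [absGrad_mk, div_lt_iff₀ hle]
    have hd : z s(a,b) he a - z s(a,b) he b
        = ((Y s(a,b) he a - Y s(a,b) he b) + (vlex a - vlex b)) / 2 := by
      simp only [hzdef]; ring
    rw [hd]
    set X := Y s(a,b) he a - Y s(a,b) he b with hX
    set L := vlex a - vlex b with hL
    have hXL : X ≠ L := hne'
    have htri : |X + L| ≤ |X| + |L| := abs_add_le _ _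
    by_contra hge
    push_neg at hge
    -- hge : τ * ℓ ≤ |(X + L)/2|
    rw [abs_div] at hge
    have h2'' : |(2:ℝ)| = 2 := by norm_num
    rw [h2''] at hge
    have hXeq : |X| = τ * ℓ s(a,b) := by linarith [abs_nonneg X, abs_nonneg L]
    have hLeq : |L| = τ * ℓ s(a,b) := by linarith [abs_nonneg X, abs_nonneg L]
    rcases abs_eq_abs.mp (hXeq.trans hLeq.symm) with h | h
    · exact hXL h
    · -- X = -L, so |X + L| = 0
      have : X + L = 0 := by rw [h]; ring
      rw [this] at hge
      simp at hge
      -- τ * ℓ e ≤ 0 but |X| = τ ℓ ≥ 0 forces X = 0, L = 0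
      have hX0 : X = 0 := abs_eq_zero.mp (le_antisymm (by linarith [abs_nonneg X]) (abs_nonneg X))
      have hL0 : L = 0 := abs_eq_zero.mp (le_antisymm (by linarith [abs_nonneg L]) (abs_nonneg L))
      exact hXL (by rw [hX0, hL0])
  -- average
  set N := (G.edgeFinset \ S).card with hN
  have hN0 : 0 < N := Finset.card_pos.mpr hne
  have hNR : (0:ℝ) < (N:ℝ) := by exact_mod_cast hN0
  set yb : V → ℝ := fun v =>
    (∑ e ∈ (G.edgeFinset \ S).attach, z e.1 e.2 v) / N with hyb
  have hybext : ∀ t ∈ T, yb t = v₀ t := by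
    intro t ht
    simp only [hyb]
    rw [Finset.sum_congr rfl fun e _ => hz1 e.1 e.2 t ht]
    rw [Finset.sum_const, Finset.card_attach, nsmul_eq_mul]
    field_simp
    rw [hN]; ring
  have hybdiff : ∀ a b : V,
      yb a - yb b = (∑ e ∈ (G.edgeFinset \ S).attach,
        (z e.1 e.2 a - z e.1 e.2 b)) / N := by
    intro a b
    simp only [hyb]
    rw [Finset.sum_sub_distrib]
    ring
  have hybS : ∀ e' ∈ S, MatchE vlex yb e' := by
    intro e' he' a b hab
    rw [hybdiff a b]
    rw [Finset.sum_congr rfl fun e _ => hz2 e.1 e.2 e' he' a b hab]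
    rw [Finset.sum_const, Finset.card_attach, nsmul_eq_mul]
    field_simp
    rw [hN]; ring
  have hyboff : ∀ e' ∈ G.edgeFinset \ S, absGrad ℓ yb e' < τ := by
    intro e' he'
    have he'E : e' ∈ G.edgeFinset := (Finset.mem_sdiff.mp he').1
    have hle : 0 < ℓ e' := hℓ e' (SimpleGraph.mem_edgeFinset.mp he'E)
    obtain ⟨a, b, rfl⟩ : ∃ a b, e' = s(a, b) := by
      induction e' with
      | _ a b => exact ⟨a, b, rfl⟩
    rw [absGrad_mk, div_lt_iff₀ hle, hybdiff a b]
    have hterm : ∀ e ∈ (G.edgeFinset \ S).attach,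
        |z e.1 e.2 a - z e.1 e.2 b| ≤ τ * ℓ s(a,b) := by
      intro e _
      have := hz3 e.1 e.2 _ he'
      rwa [absGrad_mk, div_le_iff₀ hle] at this
    have hstrict : |z s(a,b) he' a - z s(a,b) he' b| < τ * ℓ s(a,b) := by
      have := hz4 s(a,b) he'
      rwa [absGrad_mk, div_lt_iff₀ hle] at this
    have habs : |∑ e ∈ (G.edgeFinset \ S).attach, (z e.1 e.2 a - z e.1 e.2 b)|
        ≤ ∑ e ∈ (G.edgeFinset \ S).attach, |z e.1 e.2 a - z e.1 e.2 b| :=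
      Finset.abs_sum_le_sum_abs _ _
    have hsum : ∑ e ∈ (G.edgeFinset \ S).attach, |z e.1 e.2 a - z e.1 e.2 b|
        < ∑ _e ∈ (G.edgeFinset \ S).attach, τ * ℓ s(a,b) := by
      apply Finset.sum_lt_sum hterm
      exact ⟨(⟨s(a,b), he'⟩ : {x // x ∈ G.edgeFinset \ S}), Finset.mem_attach _ _, hstrict⟩
    rw [Finset.sum_const, Finset.card_attach, nsmul_eq_mul] at hsum
    rw [abs_div]
    have hNabs : |(N:ℝ)| = (N:ℝ) := abs_of_pos hNR
    rw [hNabs, div_lt_iff₀ hNR]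
    calc |∑ e ∈ (G.edgeFinset \ S).attach, (z e.1 e.2 a - z e.1 e.2 b)|
        ≤ ∑ e ∈ (G.edgeFinset \ S).attach, |z e.1 e.2 a - z e.1 e.2 b| := habs
      _ < N * (τ * ℓ s(a,b)) := hsum
      _ = τ * ℓ s(a,b) * N := by ring
  -- now the lex contradiction
  have hEval : G.edgeFinset.val = S.val + (G.edgeFinset \ S).val := by
    rw [Finset.sdiff_val]
    exact (add_tsub_cancel_of_le (Finset.val_le_iff.mpr hS)).symm
  have hCmap : Multiset.map (absGrad ℓ yb) S.val
      = Multiset.map (absGrad ℓ vlex) S.val := by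
    apply Multiset.map_congr rfl
    intro e he
    exact matchE_absGrad_eq (hybS e he)
  have hlexres : List.Lex (· < ·) (gradList G ℓ yb) (gradList G ℓ vlex) := by
    apply myLL τ (gradList G ℓ yb) (gradList G ℓ vlex)
      (Multiset.map (absGrad ℓ vlex) S.val)
      (Multiset.map (absGrad ℓ yb) (G.edgeFinset \ S).val)
      (Multiset.map (absGrad ℓ vlex) (G.edgeFinset \ S).val)
    · exact Multiset.pairwise_sort ..
    · exact Multiset.pairwise_sort ..
    · rw [gradList, Multiset.sort_eq, hEval, Multiset.map_add, hCmap]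
    · rw [gradList, Multiset.sort_eq, hEval, Multiset.map_add]
    · simp
    · intro x hx
      obtain ⟨e, he, rfl⟩ := Multiset.mem_map.mp hx
      exact hyboff e he
    · obtain ⟨e₀, he₀, hτe⟩ := hτmem
      exact Multiset.mem_map.mpr ⟨e₀, Finset.mem_val.mpr he₀, hτe⟩
  have hne' : yb ≠ vlex := by
    intro h
    rw [h] at hlexres
    exact myLexIrrefl hlexres
  exact myLexAsymm (hlex yb hybext hne') hlexres

end Main2

section Main3

variable {V : Type*} [Fintype V] [DecidableEq V]
variable {G : SimpleGraph V} [DecidableRel G.Adj]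
variable {ℓ : Sym2 V → ℝ} {T : Set V} {v₀ : V → ℝ} {vp : ℝ → V → ℝ} {vlex : V → ℝ}

theorem allMatch (hℓ : ∀ e ∈ G.edgeSet, 0 < ℓ e)
    (hpext : ∀ p : ℝ, 1 < p → ∀ t ∈ T, vp p t = v₀ t)
    (hpmin : ∀ p : ℝ, 1 < p → ∀ w : V → ℝ, (∀ t ∈ T, w t = v₀ t) →
      ∑ e ∈ G.edgeFinset, absGrad ℓ (vp p) e ^ p ≤
        ∑ e ∈ G.edgeFinset, absGrad ℓ w e ^ p)
    (hlexext : ∀ t ∈ T, vlex t = v₀ t)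
    (hlex : ∀ w : V → ℝ, (∀ t ∈ T, w t = v₀ t) → w ≠ vlex →
      List.Lex (· < ·) (gradList G ℓ vlex) (gradList G ℓ w)) :
    ∀ (k : ℕ) (S : Finset (Sym2 V)), S ⊆ G.edgeFinset →
      (G.edgeFinset \ S).card ≤ k →
      (∀ w, Cluster vp w → ∀ e ∈ S, MatchE vlex w e) →
      ∀ w, Cluster vp w → ∀ e ∈ G.edgeFinset, MatchE vlex w e := by
  intro k
  induction k with
  | zero =>
      intro S hS hcard hP w hw e he
      have h0 : G.edgeFinset \ S = ∅ :=
        Finset.card_eq_zero.mp (Nat.le_zero.mp hcard)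
      have hES : G.edgeFinset ⊆ S := by
        rwa [Finset.sdiff_eq_empty_iff_subset] at h0
      exact hP w hw e (hES he)
  | succ k ih =>
      intro S hS hcard hP w hw e he
      by_cases hne : (G.edgeFinset \ S).Nonempty
      · obtain ⟨e₀, he₀, hτm⟩ :=
          Finset.exists_max_image (G.edgeFinset \ S) (absGrad ℓ vlex) hne
        set τ := absGrad ℓ vlex e₀ with hτ
        have hτ0 : 0 ≤ τ :=
          absGrad_nonneg hℓ _ (Finset.mem_sdiff.mp he₀).1
        obtain ⟨ec, hec, hcrit⟩ := critical hℓ hlexext hlex S hS hne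
          (τ := τ) hτm ⟨e₀, he₀, rfl⟩
        have hcard' : (G.edgeFinset \ insert ec S).card ≤ k := by
          rw [Finset.sdiff_insert]
          have h1 := Finset.card_erase_of_mem hec
          omega
        refine ih (insert ec S)
          (Finset.insert_subset (Finset.mem_sdiff.mp hec).1 hS) hcard' ?_ w hw e he
        intro w' hw' e' he'
        rcases Finset.mem_insert.mp he' with rfl | hS'
        · refine hcrit w' (cluster_ext hpext hw')
            (fun e'' he'' => hP w' hw' e'' he'') ?_
          intro e'' he''
          exact stepA hℓ hpext hpmin hlexext S hS hne hw'
            (fun e3 he3 => hP w' hw' e3 he3) hτ0 hτm he''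
        · exact hP w' hw' e' hS'
      · rw [Finset.not_nonempty_iff_eq_empty] at hne
        have hES : G.edgeFinset ⊆ S := by
          rwa [Finset.sdiff_eq_empty_iff_subset] at hne
        exact hP w hw e (hES he)

theorem cluster_eq (hG : G.Connected)
    (hℓ : ∀ e ∈ G.edgeSet, 0 < ℓ e) (hT : T.Nonempty)
    (hpext : ∀ p : ℝ, 1 < p → ∀ t ∈ T, vp p t = v₀ t)
    (hpmin : ∀ p : ℝ, 1 < p → ∀ w : V → ℝ, (∀ t ∈ T, w t = v₀ t) →
      ∑ e ∈ G.edgeFinset, absGrad ℓ (vp p) e ^ p ≤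
        ∑ e ∈ G.edgeFinset, absGrad ℓ w e ^ p)
    (hlexext : ∀ t ∈ T, vlex t = v₀ t)
    (hlex : ∀ w : V → ℝ, (∀ t ∈ T, w t = v₀ t) → w ≠ vlex →
      List.Lex (· < ·) (gradList G ℓ vlex) (gradList G ℓ w))
    {w : V → ℝ} (hw : Cluster vp w) : w = vlex := by
  have hmatch : ∀ e ∈ G.edgeFinset, MatchE vlex w e :=
    allMatch hℓ hpext hpmin hlexext hlex (G.edgeFinset \ ∅).card ∅
      (Finset.empty_subset _) le_rfl (fun _ _ e he => absurd he (Finset.notMem_empty e))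
      w hw
  funext x
  obtain ⟨t₀, ht₀⟩ := hT
  have hconst : ∀ a b : V, G.Adj a b → (w a - vlex a) = (w b - vlex b) := by
    intro a b hadj
    have he : s(a, b) ∈ G.edgeFinset :=
      SimpleGraph.mem_edgeFinset.mpr ((SimpleGraph.mem_edgeSet G).mpr hadj)
    have := hmatch _ he a b rfl
    linarith
  have hwalk := walk_const (f := fun v => w v - vlex v) hconst
    ((hG.preconnected t₀ x).some)
  have h0 : w t₀ - vlex t₀ = 0 := by
    rw [cluster_ext hpext hw t₀ ht₀, hlexext t₀ ht₀]
    ring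
  have hx0 : w x - vlex x = 0 := by
    have := hwalk
    linarith
  linarith

end Main3

/-- The `ℓ_p`-minimizing extensions converge pointwise, as `p → ∞`, to the
lex-minimizer. -/
theorem lp_minimizers_tendsto_lex_min {V : Type*} [Fintype V] [DecidableEq V]
    (G : SimpleGraph V) [DecidableRel G.Adj] (hG : G.Connected)
    (ℓ : Sym2 V → ℝ) (hℓ : ∀ e ∈ G.edgeSet, 0 < ℓ e)
    (T : Set V) (hT : T.Nonempty) (v₀ : V → ℝ)
    (vp : ℝ → V → ℝ)
    (hpext : ∀ p : ℝ, 1 < p → ∀ t ∈ T, vp p t = v₀ t)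
    (hpmin : ∀ p : ℝ, 1 < p → ∀ w : V → ℝ, (∀ t ∈ T, w t = v₀ t) →
      ∑ e ∈ G.edgeFinset, absGrad ℓ (vp p) e ^ p ≤
        ∑ e ∈ G.edgeFinset, absGrad ℓ w e ^ p)
    (vlex : V → ℝ) (hlexext : ∀ t ∈ T, vlex t = v₀ t)
    (hlex : ∀ w : V → ℝ, (∀ t ∈ T, w t = v₀ t) → w ≠ vlex →
      List.Lex (· < ·) (gradList G ℓ vlex) (gradList G ℓ w)) :
    ∀ x : V, Filter.Tendsto (fun p : ℝ => vp p x) Filter.atTop (nhds (vlex x)) := by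
  suffices h : Filter.Tendsto (fun p : ℝ => vp p) atTop (nhds vlex) by
    intro x
    exact tendsto_pi_nhds.mp h x
  apply Filter.tendsto_of_subseq_tendsto
  intro u hu
  have hev2 : ∀ᶠ n in atTop, 2 ≤ u n := hu.eventually (eventually_ge_atTop 2)
  obtain ⟨N, hN⟩ := eventually_atTop.mp hev2
  obtain ⟨t₀, ht₀⟩ := hT
  set A := 1 + ∑ f ∈ G.edgeFinset, absGrad ℓ vlex f with hA
  set C := (G.edgeFinset.card : ℝ) * A with hCdef
  set Wk : (x : V) → G.Walk t₀ x := fun x => (hG.preconnected t₀ x).some with hWk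
  set R : V → ℝ := fun x => |v₀ t₀| + C * walkLen ℓ (Wk x) with hR
  have hbox : ∀ p : ℝ, 1 < p → ∀ x : V, vp p x ∈ Set.Icc (-(R x)) (R x) := by
    intro p hp x
    have hgb : ∀ a b : V, G.Adj a b → |vp p a - vp p b| ≤ C * ℓ s(a, b) := by
      intro a b hadj
      have he : s(a, b) ∈ G.edgeFinset :=
        SimpleGraph.mem_edgeFinset.mpr ((SimpleGraph.mem_edgeSet G).mpr hadj)
      have h1 : absGrad ℓ (vp p) s(a, b) ≤ C :=
        grad_bound hℓ hpmin hlexext hp he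
      have hl : 0 < ℓ s(a, b) := hℓ _ (SimpleGraph.mem_edgeFinset.mp he)
      rw [absGrad_mk, div_le_iff₀ hl] at h1
      linarith
    have hwb := walk_diff_bound hgb (Wk x)
    have hpt : vp p t₀ = v₀ t₀ := hpext p hp t₀ ht₀
    have htri : |vp p x| ≤ |vp p t₀| + |vp p t₀ - vp p x| := by
      have h1 := abs_add_le (vp p t₀) (vp p x - vp p t₀)
      have h2 : vp p t₀ + (vp p x - vp p t₀) = vp p x := by ring
      rw [h2] at h1
      have h3 : |vp p x - vp p t₀| = |vp p t₀ - vp p x| := abs_sub_comm _ _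
      linarith
    have habs : |vp p x| ≤ R x := by
      rw [hR]
      simp only []
      rw [← hpt]
      linarith
    exact abs_le.mp habs
  set sq : ℕ → (V → ℝ) := fun n => vp (u (n + N)) with hsq
  have hseqmem : ∀ n, sq n ∈ Set.pi Set.univ (fun x => Set.Icc (-(R x)) (R x)) := by
    intro n x _
    exact hbox (u (n + N)) (by have := hN (n + N) (by omega); linarith) x
  have hcpt : IsCompact (Set.pi Set.univ fun x : V => Set.Icc (-(R x)) (R x)) :=
    isCompact_univ_pi fun x => isCompact_Icc
  obtain ⟨w, hwmem, φ, hφ, hconv⟩ := hcpt.tendsto_subseq hseqmem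
  have hcl : Cluster vp w := by
    refine ⟨fun n => u (φ n + N), fun n => ?_, ?_, fun x => ?_⟩
    · have := hN (φ n + N) (by omega); linarith
    · exact hu.comp ((tendsto_add_atTop_nat N).comp hφ.tendsto_atTop)
    · exact tendsto_pi_nhds.mp hconv x
  have hwv : w = vlex :=
    cluster_eq hG hℓ ⟨t₀, ht₀⟩ hpext hpmin hlexext hlex hcl
  refine ⟨fun n => φ n + N, ?_⟩
  rw [← hwv]
  exact hconv
end
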